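/- Let p be a prime and let d ≤ n be positive integers. Let ρ_1, …, ρ_n ∈ ℤ^d be such that (ρ_1, …, ρ_d) is a ℤ-basis of ℤ^d. Assume (i) there exist positive integers b_1, …, b_n with b_1ρ_1 + … + b_nρ_n = 0, and (ii) there exist integers c_1, …, c_n with c_1ρ_1 + … + c_nρ_n = 0 such that p does not divide c_i for each i = 1, …, d. Then for every integer m₀ there exist integers a_1, …, a_n, all strictly greater than m₀ (in particular all positive), such that a_1ρ_1 + … + a_nρ_n = 0, the subgroup L of ℤ^d generated by a_1ρ_1, …, a_nρ_n has finite index in ℤ^d, and the quotient ℤ^d/L has no p-torsion, i.e. for every x ∈ ℤ^d, if p·x ∈ L then x ∈ L. -/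

import Mathlib

/-- Arithmetic core of Theorem 3.1: smooth Campana toric orbifolds are separably
Campana rationally connected. The `ρ i` are the primitive ray generators; the first `d`
of them form a `ℤ`-basis of `ℤ^d` (smoothness of a maximal cone and its neighbors). -/
theorem stmt0 (p : ℕ) (hp : p.Prime) (d n : ℕ) (hd : 0 < d) (hdn : d ≤ n)
    (ρ : Fin n → (Fin d → ℤ))
    (hbasis : ∃ B : Module.Basis (Fin d) ℤ (Fin d → ℤ), ∀ i : Fin d, B i = ρ (Fin.castLE hdn i))
    (hb : ∃ b : Fin n → ℤ, (∀ i, 0 < b i) ∧ ∑ i, b i • ρ i = 0)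
    (hc : ∃ c : Fin n → ℤ, (∑ i, c i • ρ i = 0) ∧
      ∀ i : Fin d, ¬ (p : ℤ) ∣ c (Fin.castLE hdn i)) :
    ∀ m₀ : ℤ, ∃ a : Fin n → ℤ, (∀ i, m₀ < a i) ∧ ∑ i, a i • ρ i = 0 ∧
      (Submodule.span ℤ (Set.range fun i => a i • ρ i)).toAddSubgroup.FiniteIndex ∧
      ∀ x : Fin d → ℤ, (p : ℤ) • x ∈ Submodule.span ℤ (Set.range fun i => a i • ρ i) →
        x ∈ Submodule.span ℤ (Set.range fun i => a i • ρ i) := by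
  obtain ⟨B, hB⟩ := hbasis
  obtain ⟨b, hbpos, hbsum⟩ := hb
  obtain ⟨c, hcsum, hcp⟩ := hc
  intro m₀
  -- choose a large multiple of p
  have hne : Nonempty (Fin n) := ⟨⟨0, lt_of_lt_of_le hd hdn⟩⟩
  set K : ℤ := (Finset.univ.sup' Finset.univ_nonempty fun i => (m₀ ⊔ 0) - c i) ⊔ 0
    with hK
  have hK0 : 0 ≤ K := le_sup_right
  set N : ℤ := (p : ℤ) * (K + 1) with hN
  have hpN : (p : ℤ) ∣ N := ⟨K + 1, rfl⟩
  have hNK : K < N := by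
    have h2 : (2 : ℤ) ≤ (p : ℤ) := by exact_mod_cast hp.two_le
    nlinarith
  set a : Fin n → ℤ := fun i => N * b i + c i with ha
  have haK : ∀ i, (m₀ ⊔ 0) < a i := by
    intro i
    have h1 : (m₀ ⊔ 0) - c i ≤ K := le_trans (Finset.le_sup' (fun i => (m₀ ⊔ 0) - c i) (Finset.mem_univ i)) le_sup_left
    have h2 : N ≤ N * b i := le_mul_of_one_le_right (by linarith) (hbpos i)
    simp only [ha]
    linarith
  have hapos : ∀ i, 0 < a i := fun i => lt_of_le_of_lt le_sup_right (haK i)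
  refine ⟨a, fun i => lt_of_le_of_lt le_sup_left (haK i), ?_, ?_⟩
  · have : ∑ i, a i • ρ i = N • ∑ i, b i • ρ i + ∑ i, c i • ρ i := by
      rw [Finset.smul_sum, ← Finset.sum_add_distrib]
      refine Finset.sum_congr rfl fun i _ => ?_
      simp only [ha, add_smul, smul_smul]
    rw [this, hbsum, hcsum, smul_zero, add_zero]
  set L := Submodule.span ℤ (Set.range fun i => a i • ρ i) with hL
  -- p does not divide a i for i < d
  have hpa : ∀ i : Fin d, ¬ (p : ℤ) ∣ a (Fin.castLE hdn i) := by
    intro i hdvd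
    exact hcp i (by
      have : c (Fin.castLE hdn i) = a (Fin.castLE hdn i) - N * b (Fin.castLE hdn i) := by
        simp only [ha]; ring
      rw [this]
      exact dvd_sub hdvd (Dvd.dvd.mul_right hpN _))
  set q : ℤ := ∏ i : Fin d, a (Fin.castLE hdn i) with hq
  have hq0 : q ≠ 0 := Finset.prod_ne_zero_iff.mpr fun i _ => (hapos _).ne'
  -- q • x ∈ L for every x
  have hqL : ∀ x : Fin d → ℤ, q • x ∈ L := by
    intro x
    have hx := B.sum_repr x
    rw [← hx, Finset.smul_sum]
    refine Submodule.sum_mem _ fun i _ => ?_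
    rw [smul_smul, hB i]
    obtain ⟨t, ht⟩ : a (Fin.castLE hdn i) ∣ q := Finset.dvd_prod_of_mem _ (Finset.mem_univ i)
    have : (q * B.repr x i) • ρ (Fin.castLE hdn i)
        = (t * B.repr x i) • (a (Fin.castLE hdn i) • ρ (Fin.castLE hdn i)) := by
      rw [smul_smul, ht]; ring_nf
    rw [this]
    exact Submodule.smul_mem _ _ (Submodule.subset_span ⟨Fin.castLE hdn i, rfl⟩)
  -- p and q are coprime
  have hcop : IsCoprime (p : ℤ) q := by
    have hprime : Prime (p : ℤ) := Nat.prime_iff_prime_int.mp hp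
    rw [hprime.irreducible.coprime_iff_not_dvd]
    intro hdvd
    obtain ⟨i, _, hi⟩ := hprime.exists_mem_finset_dvd hdvd
    exact hpa i hi
  constructor
  · -- finite index
    have htor : Module.IsTorsion ℤ ((Fin d → ℤ) ⧸ L) := by
      intro x
      obtain ⟨y, rfl⟩ := Submodule.Quotient.mk_surjective L x
      exact ⟨⟨q, mem_nonZeroDivisors_of_ne_zero hq0⟩, by
        rw [← Submodule.Quotient.mk_smul, Submodule.Quotient.mk_eq_zero]
        exact hqL y⟩
    have hfin : Finite ((Fin d → ℤ) ⧸ L) := Module.finite_of_fg_torsion _ htor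
    have : Finite ((Fin d → ℤ) ⧸ L.toAddSubgroup) := hfin
    exact AddSubgroup.finiteIndex_of_finite_quotient
  · -- no p-torsion
    intro x hx
    obtain ⟨u, v, huv⟩ := hcop
    have hx' : x = u • ((p : ℤ) • x) + v • (q • x) := by
      rw [smul_smul, smul_smul, ← add_smul, huv, one_smul]
    rw [hx']
    exact Submodule.add_mem _ (Submodule.smul_mem _ _ hx) (Submodule.smul_mem _ _ (hqL x))
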